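/- Let G be an ℓ × k matrix over a sufficiently large finite field 𝔽_q and let r, k₁, k₂ be such that k₁ + k₂ = k. There exists an r × k matrix U over 𝔽_q such that for every choice of k₁ linearly independent rows of G and every choice of k₂ rows of U, the resulting k × k matrix (stacking the chosen rows) is invertible, provided q is large enough relative to ℓ, r and k. -/

import Mathlib

open MvPolynomial

/-- Schwartz–Zippel style existence lemma for `Fin N` variables. -/
private lemma sz_fin {R : Type*} [CommRing R] [IsDomain R] :
    ∀ (N : ℕ) (p : MvPolynomial (Fin N) R), p ≠ 0 →
      (p.totalDegree : Cardinal) < Cardinal.mk R →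
      ∃ x : Fin N → R, eval x p ≠ 0 := by
  intro N
  induction N with
  | zero =>
    intro p hp _
    obtain ⟨a, rfl⟩ := C_surjective (Fin 0) p
    refine ⟨0, ?_⟩
    rw [eval_C]
    exact fun h => hp (by rw [h, map_zero])
  | succ N IH =>
    intro p hp hcard
    set q := finSuccEquiv R N p with hqdef
    have hq0 : q ≠ 0 := by
      intro h
      exact hp ((map_eq_zero_iff _ (finSuccEquiv R N).injective).mp h)
    have hcne : q.coeff q.natDegree ≠ 0 := by
      rw [← Polynomial.leadingCoeff]
      exact Polynomial.leadingCoeff_ne_zero.mpr hq0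
    have hcd : (q.coeff q.natDegree).totalDegree ≤ p.totalDegree := by
      have h := totalDegree_coeff_finSuccEquiv_add_le p q.natDegree
        (by rw [← hqdef]; exact hcne)
      rw [← hqdef] at h
      omega
    obtain ⟨x, hx⟩ := IH (q.coeff q.natDegree) hcne
      (lt_of_le_of_lt (by exact_mod_cast Nat.cast_le.mpr hcd) hcard)
    set φ : Polynomial R := q.map (eval x) with hφdef
    have hφ0 : φ ≠ 0 := by
      intro h
      apply hx
      have hcm : φ.coeff q.natDegree = eval x (q.coeff q.natDegree) := by
        rw [hφdef, Polynomial.coeff_map]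
      rw [h, Polynomial.coeff_zero] at hcm
      exact hcm.symm
    have hφdeg : (φ.natDegree : Cardinal) < Cardinal.mk R := by
      refine lt_of_le_of_lt ?_ hcard
      have h1 : φ.natDegree ≤ q.natDegree := Polynomial.natDegree_map_le
      have h2 : q.natDegree = p.degreeOf 0 := by rw [hqdef]; exact natDegree_finSuccEquiv p
      have h3 : p.degreeOf 0 ≤ p.totalDegree := degreeOf_le_totalDegree p 0
      have h4 : φ.natDegree ≤ p.totalDegree := h1.trans (le_of_eq_of_le h2 h3)
      exact_mod_cast Nat.cast_le.mpr h4
    obtain ⟨y, hy⟩ := φ.exists_eval_ne_zero_of_natDegree_lt_card hφ0 hφdeg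
    exact ⟨Fin.cons y x, by rwa [eval_eq_eval_mv_eval']⟩

/-- Schwartz–Zippel style existence lemma, general finite index type. -/
private lemma sz {R : Type*} [CommRing R] [IsDomain R] {σ : Type*} [Fintype σ]
    (p : MvPolynomial σ R) (hp : p ≠ 0)
    (hcard : (p.totalDegree : Cardinal) < Cardinal.mk R) :
    ∃ x : σ → R, eval x p ≠ 0 := by
  classical
  let e : σ ≃ Fin (Fintype.card σ) := Fintype.equivFin σ
  have hre : rename e p ≠ 0 := fun h => hp (rename_injective e e.injective (by rw [h, map_zero]))
  have hdeg : (rename e p).totalDegree ≤ p.totalDegree := totalDegree_rename_le e p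
  obtain ⟨x, hx⟩ := sz_fin _ (rename e p) hre
    (lt_of_le_of_lt (by exact_mod_cast Nat.cast_le.mpr hdeg) hcard)
  refine ⟨x ∘ e, ?_⟩
  rwa [eval_rename] at hx

private lemma rename_inj_aux {R σ τ : Type*} [CommSemiring R] {e : σ → τ}
    (he : Function.Injective e) : Function.Injective (rename (R := R) e) :=
  rename_injective e he

/-- Degree bound: a determinant of a matrix whose entries have total degree at
most one has total degree at most the size of the matrix. -/
private lemma totalDegree_det_le {R σ n : Type*} [CommRing R] [Fintype n] [DecidableEq n]
    (M : Matrix n n (MvPolynomial σ R)) (h : ∀ i j, (M i j).totalDegree ≤ 1) :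
    M.det.totalDegree ≤ Fintype.card n := by
  rw [Matrix.det_apply]
  refine (totalDegree_finset_sum _ _).trans (Finset.sup_le ?_)
  intro τ _
  have hprod : (∏ i, M (τ i) i).totalDegree ≤ Fintype.card n := by
    refine (totalDegree_finset_prod _ _).trans ?_
    calc ∑ i, (M (τ i) i).totalDegree ≤ ∑ _i : n, 1 :=
          Finset.sum_le_sum fun i _ => h (τ i) i
      _ = Fintype.card n := by simp
  rcases Int.units_eq_one_or (Equiv.Perm.sign τ) with hs | hs
  · rw [hs, one_smul]; exact hprod
  · rw [hs]
    have : (-1 : ℤˣ) • (∏ i, M (τ i) i) = -(∏ i, M (τ i) i) := by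
      simp [Units.smul_def]
    rw [this, totalDegree_neg]
    exact hprod

/-- Extending a linearly independent family to a full one. -/
private lemma extend_li {F : Type*} [Field F] {k k₁ k₂ : ℕ} (hk : k₁ + k₂ = k)
    (v : Fin k₁ → (Fin k → F)) (hv : LinearIndependent F v) :
    ∃ w : Fin k₂ → (Fin k → F), LinearIndependent F (Sum.elim v w) := by
  obtain ⟨W, hW⟩ := Submodule.exists_isCompl (Submodule.span F (Set.range v))
  have h2 : Module.finrank F (Submodule.span F (Set.range v)) = k₁ := by
    rw [finrank_span_eq_card hv, Fintype.card_fin]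
  have h3 : Module.finrank F (Fin k → F) = k := by
    rw [Module.finrank_fin_fun]
  have hdim : Module.finrank F W = k₂ := by
    have h1 := Submodule.finrank_add_eq_of_isCompl hW
    omega
  let bW : Module.Basis (Fin k₂) F W := Module.finBasisOfFinrankEq F W hdim
  refine ⟨fun b => (bW b : Fin k → F), hv.sum_type ?_ ?_⟩
  · exact bW.linearIndependent.map' W.subtype W.ker_subtype
  · refine hW.disjoint.mono_right (Submodule.span_le.mpr ?_)
    rintro _ ⟨b, rfl⟩
    exact (bW b).2

/-- For `k₁ + k₂ = k` there is a bound `q₀` (depending on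
`ℓ, r, k`) such that over any finite field with at least `q₀` elements
and any `ℓ × k` matrix `G`, there exists an `r × k` matrix `U` such that
stacking any `k₁` linearly independent rows of `G` with any `k₂` (distinct)
rows of `U` gives an invertible `k × k` matrix. -/
theorem exists_key_matrix (ℓ r k k₁ k₂ : ℕ) (hk : k₁ + k₂ = k) :
    ∃ q₀ : ℕ, ∀ (F : Type) [Field F] [Fintype F],
      q₀ ≤ Fintype.card F →
      ∀ G : Matrix (Fin ℓ) (Fin k) F,
        ∃ U : Matrix (Fin r) (Fin k) F,
          ∀ (s : Fin k₁ → Fin ℓ) (u : Fin k₂ → Fin r),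
            Function.Injective s → Function.Injective u →
            LinearIndependent F (fun i => G (s i)) →
            IsUnit (Matrix.det (Matrix.of fun i j : Fin k =>
              Sum.elim (fun a => G (s a)) (fun b => U (u b))
                ((finSumFinEquiv.trans (finCongr hk)).symm i) j)) := by
  classical
  refine ⟨ℓ ^ k₁ * r ^ k₂ * k + 1, ?_⟩
  intro F _ _ hq G
  set e : Fin k₁ ⊕ Fin k₂ ≃ Fin k := finSumFinEquiv.trans (finCongr hk) with he
  -- the polynomial matrices
  set Mat : (Fin k₁ → Fin ℓ) → (Fin k₂ → Fin r) →
      Matrix (Fin k) (Fin k) (MvPolynomial (Fin r × Fin k) F) := fun s u =>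
    Matrix.of fun i j => Sum.elim (fun a => MvPolynomial.C (G (s a) j))
      (fun b => MvPolynomial.X (u b, j)) (e.symm i) with hMat
  set T : Finset ((Fin k₁ → Fin ℓ) × (Fin k₂ → Fin r)) :=
    Finset.univ.filter fun p => Function.Injective p.1 ∧ Function.Injective p.2 ∧
      LinearIndependent F (fun i => G (p.1 i)) with hT
  set P : MvPolynomial (Fin r × Fin k) F := ∏ p ∈ T, (Mat p.1 p.2).det with hP
  -- each factor is a nonzero polynomial
  have hfac : ∀ p ∈ T, (Mat p.1 p.2).det ≠ 0 := by
    rintro ⟨s, u⟩ hmem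
    rw [hT, Finset.mem_filter] at hmem
    obtain ⟨-, hs, hu, hli⟩ := hmem
    obtain ⟨w, hw⟩ := extend_li hk (fun a => G (s a)) hli
    set x : Fin r × Fin k → F := fun q =>
      if h : ∃ b, u b = q.1 then w h.choose q.2 else 0 with hx
    intro hdet
    have heval : eval x (Mat s u).det = ((Mat s u).map (eval x)).det :=
      RingHom.map_det (eval x) (Mat s u)
    have hmap : (Mat s u).map (eval x) =
        Matrix.of fun i j => Sum.elim (fun a => G (s a)) w (e.symm i) j := by
      ext i j
      rw [Matrix.map_apply, hMat]
      cases hsum : e.symm i with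
      | inl a => simp [hsum]
      | inr b =>
        simp only [hsum, Matrix.of_apply, Sum.elim_inr, eval_X]
        simp only [hx]
        have hex : ∃ b', u b' = u b := ⟨b, rfl⟩
        rw [dif_pos hex]
        have heq : hex.choose = b := hu hex.choose_spec
        rw [heq]
    have hA : IsUnit ((Mat s u).map (eval x)) := by
      rw [hmap]
      rw [← Matrix.linearIndependent_rows_iff_isUnit]
      have : LinearIndependent F ((Sum.elim (fun a => G (s a)) w) ∘ e.symm) :=
        hw.comp e.symm e.symm.injective
      exact this
    rw [hdet, map_zero] at heval
    have hud := (Matrix.isUnit_iff_isUnit_det _).mp hA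
    rw [← heval] at hud
    exact hud.ne_zero rfl
  have hP0 : P ≠ 0 := Finset.prod_ne_zero_iff.mpr hfac
  -- degree bound
  have hdeg : P.totalDegree ≤ ℓ ^ k₁ * r ^ k₂ * k := by
    rw [hP]
    refine (totalDegree_finset_prod _ _).trans ?_
    have hone : ∀ p : (Fin k₁ → Fin ℓ) × (Fin k₂ → Fin r),
        (Mat p.1 p.2).det.totalDegree ≤ k := by
      intro p
      have := totalDegree_det_le (Mat p.1 p.2) ?_
      · simpa using this
      · intro i j
        rw [hMat]
        cases hsum : e.symm i with
        | inl a => simp [hsum]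
        | inr b => simp [hsum]
    calc ∑ p ∈ T, (Mat p.1 p.2).det.totalDegree ≤ ∑ _p ∈ T, k :=
          Finset.sum_le_sum fun p _ => hone p
      _ = T.card * k := by simp [Finset.sum_const, Nat.smul_one_eq_cast]
      _ ≤ (ℓ ^ k₁ * r ^ k₂) * k := by
          have : T.card ≤ ℓ ^ k₁ * r ^ k₂ := by
            have h1 : T.card ≤ Fintype.card ((Fin k₁ → Fin ℓ) × (Fin k₂ → Fin r)) :=
              (Finset.card_filter_le _ _).trans_eq (Finset.card_univ)
            simpa [Fintype.card_fun] using h1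
          exact Nat.mul_le_mul_right k this
  have hdeg' : (P.totalDegree : Cardinal) < Cardinal.mk F := by
    have hlt : P.totalDegree < Fintype.card F := by omega
    rw [Cardinal.mk_fintype]
    exact_mod_cast hlt
  obtain ⟨x, hx⟩ := sz P hP0 hdeg'
  refine ⟨Matrix.of fun i j => x (i, j), ?_⟩
  intro s u hs hu hli
  have hmem : (s, u) ∈ T := by
    rw [hT, Finset.mem_filter]
    exact ⟨Finset.mem_univ _, hs, hu, hli⟩
  have hxfac : eval x ((Mat s u).det) ≠ 0 := by
    have : eval x P = ∏ p ∈ T, eval x ((Mat p.1 p.2).det) := by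
      rw [hP, map_prod]
    rw [this] at hx
    exact Finset.prod_ne_zero_iff.mp hx (s, u) hmem
  have heval : eval x (Mat s u).det = ((Mat s u).map (eval x)).det :=
    RingHom.map_det (eval x) (Mat s u)
  have hmapeq : (Mat s u).map (eval x) =
      Matrix.of fun i j : Fin k =>
        Sum.elim (fun a => G (s a)) (fun b => (Matrix.of fun i j => x (i, j)) (u b))
          ((finSumFinEquiv.trans (finCongr hk)).symm i) j := by
    ext i j
    rw [Matrix.map_apply, hMat]
    cases hsum : e.symm i with
    | inl a => simp [← he, hsum]
    | inr b => simp [← he, hsum]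
  rw [heval, hmapeq] at hxfac
  exact isUnit_iff_ne_zero.mpr hxfac
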